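/- arXiv:2209.15600 — 2 statements merged into one kernel-verified Lean document; each statement's English description precedes it below -/
import Mathlib

section
/- With R_>^ν and R_<^ν defined as the (-1)^g-normalized δ-derivatives at δ = 0 of the respective contour integrals (the numerator for R_<^ν being (e^{u(λ+μ+1)} - e^{u(λ-μ+k+2)+δφ̇(u)}) e^{u(ν₁+ν₂)/2} (2k+4+δφ̈(u))^g), their difference satisfies R_>^ν(k;λ,μ) − R_<^ν(k;λ,μ) = g·(−(2k+4))^{g−1}·Res_{u=0} [ e^{u(λ−μ)} e^{u(ν₁+ν₂)/2} φ̈(u) / (2 sinh(u/2))^{2g} ] du. -/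
open Complex

/-- The rank-2 character `φ(u) = sinh((d+1)u/2)/sinh(u/2)` where `d = ν₁ - ν₂`. -/
noncomputable def phiC (d : ℤ) (u : ℂ) : ℂ :=
  Complex.sinh (((d : ℂ) + 1) * u / 2) / Complex.sinh (u / 2)

/-- `φ̇ = 2 φ'`. -/
noncomputable def phiDot (d : ℤ) (u : ℂ) : ℂ := 2 * deriv (phiC d) u

/-- `φ̈ = 2 φ̇' = 4 φ''`. -/
noncomputable def phiDDot (d : ℤ) (u : ℂ) : ℂ := 2 * deriv (fun y => phiDot d y) u

/-- `R_>^ν(k;λ,μ)`, defined as `(-1)^g` times the `δ`-derivative at `δ = 0` of the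
contour integral `(1/2πi)∮_{|u|=ε} (e^{u(λ+μ+1)} - e^{u(λ-μ)}) e^{u(ν₁+ν₂)/2}
(2k+4+δφ̈(u))^g / ((2 sinh(u/2))^{2g} (1 - e^{u(k+2)+δφ̇(u)})) du`. -/
noncomputable def Rgt (g k : ℕ) (ν₁ ν₂ : ℤ) (ε : ℝ) (l m : ℤ) : ℂ :=
  (-1 : ℂ) ^ g *
    deriv (fun δ : ℂ =>
      (2 * (Real.pi : ℂ) * Complex.I)⁻¹ *
        ∮ u in C(0, ε),
          (Complex.exp (u * ((l : ℂ) + (m : ℂ) + 1)) - Complex.exp (u * ((l : ℂ) - (m : ℂ)))) *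
              Complex.exp (u * ((ν₁ : ℂ) + (ν₂ : ℂ)) / 2) *
              (2 * (k : ℂ) + 4 + δ * phiDDot (ν₁ - ν₂) u) ^ g /
            ((2 * Complex.sinh (u / 2)) ^ (2 * g) *
              (1 - Complex.exp (u * ((k : ℂ) + 2) + δ * phiDot (ν₁ - ν₂) u)))) 0


/-- `R_<^ν(k;λ,μ)`, with numerator `(e^{u(λ+μ+1)} − e^{u(λ−μ+k+2)+δφ̇(u)})
e^{u(ν₁+ν₂)/2}(2k+4+δφ̈(u))^g`. -/
noncomputable def Rlt (g k : ℕ) (ν₁ ν₂ : ℤ) (ε : ℝ) (l m : ℤ) : ℂ :=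
  (-1 : ℂ) ^ g *
    deriv (fun δ : ℂ =>
      (2 * (Real.pi : ℂ) * Complex.I)⁻¹ *
        ∮ u in C(0, ε),
          (Complex.exp (u * ((l : ℂ) + (m : ℂ) + 1)) -
                Complex.exp (u * ((l : ℂ) - (m : ℂ) + (k : ℂ) + 2) + δ * phiDot (ν₁ - ν₂) u)) *
              Complex.exp (u * ((ν₁ : ℂ) + (ν₂ : ℂ)) / 2) *
              (2 * (k : ℂ) + 4 + δ * phiDDot (ν₁ - ν₂) u) ^ g /
            ((2 * Complex.sinh (u / 2)) ^ (2 * g) *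
              (1 - Complex.exp (u * ((k : ℂ) + 2) + δ * phiDot (ν₁ - ν₂) u)))) 0

section Auxiliary

open Metric MeasureTheory intervalIntegral Set

lemma sinh_ne_zero_of_small {z : ℂ} (hz : z ≠ 0) (h : ‖z‖ < Real.pi) :
    Complex.sinh z ≠ 0 := by
  intro h0
  have hdef : Complex.sinh z = (Complex.exp z - Complex.exp (-z)) / 2 := rfl
  rw [hdef, div_eq_zero_iff, sub_eq_zero] at h0
  have h0' : Complex.exp z = Complex.exp (-z) := by
    rcases h0 with h0 | h0
    · exact h0
    · exact absurd h0 two_ne_zero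
  rw [Complex.exp_eq_exp_iff_exists_int] at h0'
  obtain ⟨n, hn⟩ := h0'
  have hzz : z = n * Real.pi * Complex.I := by linear_combination hn / 2
  have habs : ‖z‖ = |(n : ℝ)| * Real.pi := by
    rw [hzz]
    simp [Complex.norm_real, abs_of_pos Real.pi_pos]
  rw [habs] at h
  have hn1 : |(n : ℝ)| < 1 := by
    by_contra hc
    push_neg at hc
    nlinarith [Real.pi_pos]
  have hn0 : n = 0 := by
    have h2 : |n| < 1 := by exact_mod_cast (by exact hn1 : (|n| : ℝ) < 1)
    have h3 := abs_lt.mp h2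
    omega
  exact hz (by simp [hzz, hn0])

lemma analyticAt_sinh' {w : ℂ} : AnalyticAt ℂ Complex.sinh w := by
  have : Complex.sinh = fun z => (Complex.exp z - Complex.exp (-z)) / 2 := rfl
  rw [this]
  exact (analyticAt_cexp.sub (analyticAt_cexp.comp analyticAt_id.neg)).div
    analyticAt_const two_ne_zero

lemma analyticAt_sinh_comp (c : ℂ) (u : ℂ) :
    AnalyticAt ℂ (fun z : ℂ => Complex.sinh (c * z / 2)) u := by
  exact analyticAt_sinh'.comp
    (((analyticAt_const.mul analyticAt_id).div analyticAt_const two_ne_zero))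

lemma analyticOnNhd_phiC (d : ℤ) :
    AnalyticOnNhd ℂ (phiC d) {u : ℂ | Complex.sinh (u / 2) ≠ 0} := by
  intro u hu
  unfold phiC
  have h2 : AnalyticAt ℂ (fun z : ℂ => Complex.sinh (z / 2)) u := by
    have := analyticAt_sinh_comp 1 u
    simpa using this
  exact (analyticAt_sinh_comp ((d : ℂ) + 1) u).div h2 hu

lemma analyticOnNhd_phiDot (d : ℤ) :
    AnalyticOnNhd ℂ (phiDot d) {u : ℂ | Complex.sinh (u / 2) ≠ 0} := by
  have h := (analyticOnNhd_phiC d).deriv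
  intro u hu
  exact (analyticAt_const.mul (h u hu) : AnalyticAt ℂ (fun y => 2 * deriv (phiC d) y) u)

lemma analyticOnNhd_phiDDot (d : ℤ) :
    AnalyticOnNhd ℂ (phiDDot d) {u : ℂ | Complex.sinh (u / 2) ≠ 0} := by
  have h := (analyticOnNhd_phiDot d).deriv
  intro u hu
  exact (analyticAt_const.mul (h u hu) :
    AnalyticAt ℂ (fun y => 2 * deriv (fun y => phiDot d y) y) u)

lemma sphere_sinh_ne {ε : ℝ} (hε : 0 < ε) (hε1 : ε < 1) {u : ℂ}
    (hu : u ∈ sphere (0 : ℂ) ε) : Complex.sinh (u / 2) ≠ 0 := by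
  have h1 : ‖u‖ = ε := by
    simpa [Complex.dist_eq] using hu
  apply sinh_ne_zero_of_small
  · intro h
    rw [div_eq_zero_iff] at h
    rcases h with h | h
    · rw [h] at h1; simp at h1; exact absurd h1.symm (ne_of_gt hε)
    · exact two_ne_zero h
  · rw [norm_div, h1]
    simp only [Complex.norm_two]
    nlinarith [Real.pi_gt_three]

lemma contOn_phiDot (d : ℤ) {ε : ℝ} (hε : 0 < ε) (hε1 : ε < 1) :
    ContinuousOn (phiDot d) (sphere (0 : ℂ) ε) := fun u hu =>
  ((analyticOnNhd_phiDot d) u (sphere_sinh_ne hε hε1 hu)).continuousAt.continuousWithinAt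

lemma contOn_phiDDot (d : ℤ) {ε : ℝ} (hε : 0 < ε) (hε1 : ε < 1) :
    ContinuousOn (phiDDot d) (sphere (0 : ℂ) ε) := fun u hu =>
  ((analyticOnNhd_phiDDot d) u (sphere_sinh_ne hε hε1 hu)).continuousAt.continuousWithinAt

lemma abs_k2 (k : ℕ) : ‖(k : ℂ) + 2‖ = (k : ℝ) + 2 := by
  rw [show ((k : ℂ) + 2) = (((k : ℝ) + 2 : ℝ) : ℂ) by push_cast; ring, Complex.norm_real, Real.norm_eq_abs,
    abs_of_pos (by positivity)]

lemma one_sub_exp_ne {k : ℕ} {d : ℤ} {ε r M : ℝ} (hε : 0 < ε) (hkε : ε * ((k : ℝ) + 2) < 1)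
    (hM0 : 0 ≤ M) (hrM : r * M < ε * ((k : ℝ) + 2) / 2)
    {u δ : ℂ} (hu : ‖u‖ = ε) (hp : ‖phiDot d u‖ ≤ M)
    (hδ : ‖δ‖ ≤ r) :
    1 - Complex.exp (u * ((k : ℂ) + 2) + δ * phiDot d u) ≠ 0 := by
  intro h0
  have h1 : Complex.exp (u * ((k : ℂ) + 2) + δ * phiDot d u) = 1 := by
    have := sub_eq_zero.mp h0; exact this.symm
  rw [Complex.exp_eq_one_iff] at h1
  obtain ⟨n, hn⟩ := h1
  set z := u * ((k : ℂ) + 2) + δ * phiDot d u with hz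
  have habs1 : ‖u * ((k : ℂ) + 2)‖ = ε * ((k : ℝ) + 2) := by
    rw [norm_mul, hu, abs_k2]
  have hδp : ‖δ * phiDot d u‖ ≤ r * M := by
    rw [norm_mul]
    have h2 : (0:ℝ) ≤ ‖phiDot d u‖ := norm_nonneg _
    nlinarith [norm_nonneg δ]
  have hlow : ε * ((k : ℝ) + 2) / 2 < ‖z‖ := by
    have h3 : ‖u * ((k : ℂ) + 2)‖ ≤ ‖z‖ + ‖δ * phiDot d u‖ := by
      have h5 := norm_sub_le z (δ * phiDot d u)
      calc ‖u * ((k : ℂ) + 2)‖ = ‖z - δ * phiDot d u‖ := by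
            rw [hz]; ring_nf
          _ ≤ _ := h5
    nlinarith
  have hhigh : ‖z‖ < 2 * Real.pi := by
    have h4 : ‖z‖ ≤ ε * ((k : ℝ) + 2) + r * M := by
      calc ‖z‖ ≤ ‖u * ((k : ℂ) + 2)‖ + ‖δ * phiDot d u‖ :=
            norm_add_le _ _
        _ ≤ _ := by rw [habs1]; linarith
    nlinarith [Real.pi_gt_three]
  have habsz : ‖z‖ = |(n : ℝ)| * (2 * Real.pi) := by
    rw [hn]
    simp [Complex.norm_real, abs_of_pos Real.pi_pos, mul_assoc]
  rcases eq_or_ne n 0 with h | h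
  · rw [h] at habsz; simp at habsz; rw [habsz] at hlow; simp at hlow
    nlinarith
  · have : (1:ℝ) ≤ |(n : ℝ)| := by
      rw [show |(n:ℝ)| = ((|n| : ℤ) : ℝ) by push_cast; ring]
      exact_mod_cast Int.one_le_abs h
    nlinarith [Real.pi_pos, norm_nonneg z]

lemma one_sub_exp_ne₀ {k : ℕ} (d : ℤ) {ε : ℝ} (hε : 0 < ε) (hkε : ε * ((k : ℝ) + 2) < 1)
    {u : ℂ} (hu : ‖u‖ = ε) :
    1 - Complex.exp (u * ((k : ℂ) + 2)) ≠ 0 := by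
  have h := one_sub_exp_ne (d := d) (r := 0) (δ := (0:ℂ)) (M := ‖phiDot d u‖) hε hkε
    (norm_nonneg _) (by rw [zero_mul]; positivity) hu le_rfl (by simp)
  simpa using h

/-- The common integrand (`τ = 0` gives the `R_>` integrand, `τ = 1` the `R_<` one). -/
noncomputable def fI (g k : ℕ) (d : ℤ) (γ τ α β : ℂ) (δ u : ℂ) : ℂ :=
  (Complex.exp (u * α) - Complex.exp (u * β + τ * (δ * phiDot d u))) * Complex.exp (u * γ / 2) *
      (2 * (k : ℂ) + 4 + δ * phiDDot d u) ^ g /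
    ((2 * Complex.sinh (u / 2)) ^ (2 * g) *
      (1 - Complex.exp (u * ((k : ℂ) + 2) + δ * phiDot d u)))

/-- The `δ`-derivative of `fI`. -/
noncomputable def fI' (g k : ℕ) (d : ℤ) (γ τ α β : ℂ) (δ u : ℂ) : ℂ :=
  (((0 - Complex.exp (u * β + τ * (δ * phiDot d u)) * (τ * phiDot d u)) * Complex.exp (u * γ / 2) *
        (2 * (k : ℂ) + 4 + δ * phiDDot d u) ^ g +
      (Complex.exp (u * α) - Complex.exp (u * β + τ * (δ * phiDot d u))) * Complex.exp (u * γ / 2) *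
        ((g : ℂ) * (2 * (k : ℂ) + 4 + δ * phiDDot d u) ^ (g - 1) * phiDDot d u)) *
      ((2 * Complex.sinh (u / 2)) ^ (2 * g) *
        (1 - Complex.exp (u * ((k : ℂ) + 2) + δ * phiDot d u))) -
    (Complex.exp (u * α) - Complex.exp (u * β + τ * (δ * phiDot d u))) * Complex.exp (u * γ / 2) *
        (2 * (k : ℂ) + 4 + δ * phiDDot d u) ^ g *
      ((2 * Complex.sinh (u / 2)) ^ (2 * g) *
        (0 - Complex.exp (u * ((k : ℂ) + 2) + δ * phiDot d u) * phiDot d u))) /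
    ((2 * Complex.sinh (u / 2)) ^ (2 * g) *
      (1 - Complex.exp (u * ((k : ℂ) + 2) + δ * phiDot d u))) ^ 2

lemma hasDerivAt_fI (g k : ℕ) (d : ℤ) (γ τ α β : ℂ) {δ u : ℂ}
    (hS : Complex.sinh (u / 2) ≠ 0)
    (hW : 1 - Complex.exp (u * ((k : ℂ) + 2) + δ * phiDot d u) ≠ 0) :
    HasDerivAt (fun y => fI g k d γ τ α β y u) (fI' g k d γ τ α β δ u) δ := by
  have hWτ : HasDerivAt (fun y : ℂ => Complex.exp (u * β + τ * (y * phiDot d u)))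
      (Complex.exp (u * β + τ * (δ * phiDot d u)) * (τ * phiDot d u)) δ := by
    have h1 : HasDerivAt (fun y : ℂ => u * β + τ * (y * phiDot d u)) (τ * phiDot d u) δ := by
      simpa using (((hasDerivAt_id δ).mul_const (phiDot d u)).const_mul τ).const_add (u * β)
    exact h1.cexp
  have hW' : HasDerivAt (fun y : ℂ => Complex.exp (u * ((k : ℂ) + 2) + y * phiDot d u))
      (Complex.exp (u * ((k : ℂ) + 2) + δ * phiDot d u) * phiDot d u) δ := by
    have h1 : HasDerivAt (fun y : ℂ => u * ((k : ℂ) + 2) + y * phiDot d u) (phiDot d u) δ := by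
      simpa using ((hasDerivAt_id δ).mul_const (phiDot d u)).const_add (u * ((k : ℂ) + 2))
    exact h1.cexp
  have hP : HasDerivAt (fun y : ℂ => (2 * (k : ℂ) + 4 + y * phiDDot d u) ^ g)
      ((g : ℂ) * (2 * (k : ℂ) + 4 + δ * phiDDot d u) ^ (g - 1) * phiDDot d u) δ := by
    have h1 : HasDerivAt (fun y : ℂ => 2 * (k : ℂ) + 4 + y * phiDDot d u) (phiDDot d u) δ := by
      simpa using ((hasDerivAt_id δ).mul_const (phiDDot d u)).const_add (2 * (k : ℂ) + 4)
    exact h1.pow g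
  have hnum := (((hasDerivAt_const δ (Complex.exp (u * α))).sub hWτ).mul_const
    (Complex.exp (u * γ / 2))).mul hP
  have hden := ((hasDerivAt_const δ (1 : ℂ)).sub hW').const_mul
    ((2 * Complex.sinh (u / 2)) ^ (2 * g))
  have hne : (2 * Complex.sinh (u / 2)) ^ (2 * g) *
      (1 - Complex.exp (u * ((k : ℂ) + 2) + δ * phiDot d u)) ≠ 0 :=
    mul_ne_zero (pow_ne_zero _ (mul_ne_zero two_ne_zero hS)) hW
  exact hnum.div hden hne

lemma fI'_sub (g k : ℕ) (hg : 1 ≤ g) (d : ℤ) (γ α β : ℂ) {u : ℂ}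
    (hS : Complex.sinh (u / 2) ≠ 0)
    (hW : 1 - Complex.exp (u * ((k : ℂ) + 2)) ≠ 0) :
    fI' g k d γ 0 α β 0 u - fI' g k d γ 1 α (β + ((k : ℂ) + 2)) 0 u
      = -((g : ℂ) * (2 * (k : ℂ) + 4) ^ (g - 1) *
          (Complex.exp (u * β) * Complex.exp (u * γ / 2) * phiDDot d u /
            (2 * Complex.sinh (u / 2)) ^ (2 * g))) := by
  have hexp : Complex.exp (u * (β + ((k : ℂ) + 2))) =
      Complex.exp (u * β) * Complex.exp (u * ((k : ℂ) + 2)) := by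
    rw [← Complex.exp_add]; ring_nf
  have hS2 : (2 * Complex.sinh (u / 2)) ^ (2 * g) ≠ 0 :=
    pow_ne_zero _ (mul_ne_zero two_ne_zero hS)
  have hCg : (2 * (k : ℂ) + 4) ^ g = (2 * (k : ℂ) + 4) ^ (g - 1) * (2 * (k : ℂ) + 4) := by
    rw [← pow_succ]; congr 1; omega
  unfold fI'
  simp only [zero_mul, mul_zero, add_zero, zero_add, one_mul, zero_sub, sub_zero]
  rw [hexp, hCg]
  field_simp
  ring

lemma contOn_fI' (g k : ℕ) (d : ℤ) (γ τ α β : ℂ) {ε r : ℝ} (hε : 0 < ε) (hε1 : ε < 1)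
    (hne : ∀ x : ℂ × ℂ, x ∈ closedBall (0 : ℂ) r ×ˢ sphere (0 : ℂ) ε →
      1 - Complex.exp (x.2 * ((k : ℂ) + 2) + x.1 * phiDot d x.2) ≠ 0) :
    ContinuousOn (fun x : ℂ × ℂ => fI' g k d γ τ α β x.1 x.2)
      (closedBall (0 : ℂ) r ×ˢ sphere (0 : ℂ) ε) := by
  set V : Set (ℂ × ℂ) := closedBall (0 : ℂ) r ×ˢ sphere (0 : ℂ) ε
  have hp : ContinuousOn (fun x : ℂ × ℂ => phiDot d x.2) V :=
    (contOn_phiDot d hε hε1).comp continuous_snd.continuousOn (fun x hx => hx.2)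
  have hq : ContinuousOn (fun x : ℂ × ℂ => phiDDot d x.2) V :=
    (contOn_phiDDot d hε hε1).comp continuous_snd.continuousOn (fun x hx => hx.2)
  have hA : ContinuousOn (fun x : ℂ × ℂ => Complex.exp (x.2 * α)) V :=
    (Complex.continuous_exp.comp (continuous_snd.mul continuous_const)).continuousOn
  have hE : ContinuousOn (fun x : ℂ × ℂ => Complex.exp (x.2 * γ / 2)) V :=
    (Complex.continuous_exp.comp ((continuous_snd.mul continuous_const).div_const 2)).continuousOn
  have hWτ : ContinuousOn (fun x : ℂ × ℂ =>
      Complex.exp (x.2 * β + τ * (x.1 * phiDot d x.2))) V :=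
    Complex.continuous_exp.comp_continuousOn
      (((continuous_snd.mul continuous_const).continuousOn).add
        (continuousOn_const.mul (continuous_fst.continuousOn.mul hp)))
  have hW : ContinuousOn (fun x : ℂ × ℂ =>
      Complex.exp (x.2 * ((k : ℂ) + 2) + x.1 * phiDot d x.2)) V :=
    Complex.continuous_exp.comp_continuousOn
      (((continuous_snd.mul continuous_const).continuousOn).add
        (continuous_fst.continuousOn.mul hp))
  have hC : ContinuousOn (fun x : ℂ × ℂ => 2 * (k : ℂ) + 4 + x.1 * phiDDot d x.2) V :=
    continuousOn_const.add (continuous_fst.continuousOn.mul hq)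
  have hSc : ContinuousOn (fun x : ℂ × ℂ => (2 * Complex.sinh (x.2 / 2)) ^ (2 * g)) V :=
    ((continuous_const.mul (Complex.continuous_sinh.comp (continuous_snd.div_const 2))).pow
      (2 * g)).continuousOn
  have hD : ContinuousOn (fun x : ℂ × ℂ => (2 * Complex.sinh (x.2 / 2)) ^ (2 * g) *
      (1 - Complex.exp (x.2 * ((k : ℂ) + 2) + x.1 * phiDot d x.2))) V :=
    hSc.mul (continuousOn_const.sub hW)
  have hDne : ∀ x ∈ V, (2 * Complex.sinh (x.2 / 2)) ^ (2 * g) *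
      (1 - Complex.exp (x.2 * ((k : ℂ) + 2) + x.1 * phiDot d x.2)) ≠ 0 := fun x hx =>
    mul_ne_zero (pow_ne_zero _ (mul_ne_zero two_ne_zero (sphere_sinh_ne hε hε1 hx.2)))
      (hne x hx)
  unfold fI'
  apply ContinuousOn.div _ (hD.pow 2) (fun x hx => pow_ne_zero _ (hDne x hx))
  apply ContinuousOn.sub
  · apply ContinuousOn.mul _ hD
    apply ContinuousOn.add
    · exact ((continuousOn_const.sub (hWτ.mul (continuousOn_const.mul hp))).mul hE).mul
        (hC.pow g)
    · exact ((hA.sub hWτ).mul hE).mul ((continuousOn_const.mul (hC.pow (g - 1))).mul hq)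
  · exact (((hA.sub hWτ).mul hE).mul (hC.pow g)).mul
      (hSc.mul (continuousOn_const.sub (hW.mul hp)))

lemma contOn_fI (g k : ℕ) (d : ℤ) (γ τ α β : ℂ) {ε r : ℝ} (hε : 0 < ε) (hε1 : ε < 1)
    (hne : ∀ x : ℂ × ℂ, x ∈ closedBall (0 : ℂ) r ×ˢ sphere (0 : ℂ) ε →
      1 - Complex.exp (x.2 * ((k : ℂ) + 2) + x.1 * phiDot d x.2) ≠ 0) :
    ContinuousOn (fun x : ℂ × ℂ => fI g k d γ τ α β x.1 x.2)
      (closedBall (0 : ℂ) r ×ˢ sphere (0 : ℂ) ε) := by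
  set V : Set (ℂ × ℂ) := closedBall (0 : ℂ) r ×ˢ sphere (0 : ℂ) ε
  have hp : ContinuousOn (fun x : ℂ × ℂ => phiDot d x.2) V :=
    (contOn_phiDot d hε hε1).comp continuous_snd.continuousOn (fun x hx => hx.2)
  have hq : ContinuousOn (fun x : ℂ × ℂ => phiDDot d x.2) V :=
    (contOn_phiDDot d hε hε1).comp continuous_snd.continuousOn (fun x hx => hx.2)
  have hA : ContinuousOn (fun x : ℂ × ℂ => Complex.exp (x.2 * α)) V :=
    (Complex.continuous_exp.comp (continuous_snd.mul continuous_const)).continuousOn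
  have hE : ContinuousOn (fun x : ℂ × ℂ => Complex.exp (x.2 * γ / 2)) V :=
    (Complex.continuous_exp.comp ((continuous_snd.mul continuous_const).div_const 2)).continuousOn
  have hWτ : ContinuousOn (fun x : ℂ × ℂ =>
      Complex.exp (x.2 * β + τ * (x.1 * phiDot d x.2))) V :=
    Complex.continuous_exp.comp_continuousOn
      (((continuous_snd.mul continuous_const).continuousOn).add
        (continuousOn_const.mul (continuous_fst.continuousOn.mul hp)))
  have hW : ContinuousOn (fun x : ℂ × ℂ =>
      Complex.exp (x.2 * ((k : ℂ) + 2) + x.1 * phiDot d x.2)) V :=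
    Complex.continuous_exp.comp_continuousOn
      (((continuous_snd.mul continuous_const).continuousOn).add
        (continuous_fst.continuousOn.mul hp))
  have hC : ContinuousOn (fun x : ℂ × ℂ => 2 * (k : ℂ) + 4 + x.1 * phiDDot d x.2) V :=
    continuousOn_const.add (continuous_fst.continuousOn.mul hq)
  have hSc : ContinuousOn (fun x : ℂ × ℂ => (2 * Complex.sinh (x.2 / 2)) ^ (2 * g)) V :=
    ((continuous_const.mul (Complex.continuous_sinh.comp (continuous_snd.div_const 2))).pow
      (2 * g)).continuousOn
  have hDne : ∀ x ∈ V, (2 * Complex.sinh (x.2 / 2)) ^ (2 * g) *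
      (1 - Complex.exp (x.2 * ((k : ℂ) + 2) + x.1 * phiDot d x.2)) ≠ 0 := fun x hx =>
    mul_ne_zero (pow_ne_zero _ (mul_ne_zero two_ne_zero (sphere_sinh_ne hε hε1 hx.2)))
      (hne x hx)
  unfold fI
  exact ContinuousOn.div (((hA.sub hWτ).mul hE).mul (hC.pow g))
    (hSc.mul (continuousOn_const.sub hW)) hDne

open Metric MeasureTheory intervalIntegral Set in
set_option maxHeartbeats 1600000 in
lemma hasDerivAt_int (g k : ℕ) (d : ℤ) (γ τ α β : ℂ) {ε : ℝ} (hε : 0 < ε)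
    (hkε : ε * ((k : ℝ) + 2) < 1) :
    IntervalIntegrable (fun θ : ℝ => deriv (circleMap 0 ε) θ •
        fI' g k d γ τ α β 0 (circleMap 0 ε θ)) volume 0 (2 * Real.pi) ∧
      HasDerivAt (fun δ : ℂ => ∫ θ in (0:ℝ)..(2 * Real.pi),
          deriv (circleMap 0 ε) θ • fI g k d γ τ α β δ (circleMap 0 ε θ))
        (∫ θ in (0:ℝ)..(2 * Real.pi),
          deriv (circleMap 0 ε) θ • fI' g k d γ τ α β 0 (circleMap 0 ε θ)) 0 := by
  have hk0 : (0:ℝ) ≤ (k : ℝ) := Nat.cast_nonneg k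
  have hε1 : ε < 1 := by nlinarith
  -- bound on phiDot over the sphere
  obtain ⟨M₀, hM₀⟩ := (isCompact_sphere (0:ℂ) ε).exists_bound_of_continuousOn
    (contOn_phiDot d hε hε1)
  set M : ℝ := max M₀ 0 with hMdef
  have hM0 : 0 ≤ M := le_max_right _ _
  have hM : ∀ u ∈ sphere (0:ℂ) ε, ‖phiDot d u‖ ≤ M := fun u hu =>
    le_trans (hM₀ u hu) (le_max_left _ _)
  set r : ℝ := min 1 (ε * ((k : ℝ) + 2) / (2 * (M + 1))) with hrdef
  have hr0 : 0 < r := lt_min one_pos (by positivity)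
  have hrM : r * M < ε * ((k : ℝ) + 2) / 2 := by
    have h1 : r ≤ ε * ((k : ℝ) + 2) / (2 * (M + 1)) := min_le_right _ _
    have h2 : 0 < ε * ((k : ℝ) + 2) := by positivity
    have h3 : r * M ≤ ε * ((k : ℝ) + 2) / (2 * (M + 1)) * M :=
      mul_le_mul_of_nonneg_right h1 hM0
    have h4 : ε * ((k : ℝ) + 2) / (2 * (M + 1)) * M < ε * ((k : ℝ) + 2) / 2 := by
      rw [div_mul_eq_mul_div, div_lt_div_iff₀ (by positivity) (by norm_num)]
      nlinarith
    linarith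
  have habs : ∀ θ : ℝ, ‖circleMap 0 ε θ‖ = ε := by
    intro θ; rw [norm_circleMap_zero, abs_of_pos hε]
  have hne2 : ∀ δ u : ℂ, δ ∈ closedBall (0 : ℂ) r → u ∈ sphere (0 : ℂ) ε →
      1 - Complex.exp (u * ((k : ℂ) + 2) + δ * phiDot d u) ≠ 0 := by
    intro δ u h1 h2
    have hu : ‖u‖ = ε := by simpa [Complex.dist_eq] using h2
    have hδ : ‖δ‖ ≤ r := by simpa [Complex.dist_eq] using h1
    exact one_sub_exp_ne hε hkε hM0 hrM hu (hM u h2) hδ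
  have hne : ∀ x : ℂ × ℂ, x ∈ closedBall (0 : ℂ) r ×ˢ sphere (0 : ℂ) ε →
      1 - Complex.exp (x.2 * ((k : ℂ) + 2) + x.1 * phiDot d x.2) ≠ 0 :=
    fun x hx => hne2 x.1 x.2 hx.1 hx.2
  obtain ⟨C, hC⟩ := ((isCompact_closedBall (0:ℂ) r).prod
    (isCompact_sphere (0:ℂ) ε)).exists_bound_of_continuousOn
    (contOn_fI' g k d γ τ α β hε hε1 hne)
  have hC2 : ∀ δ u : ℂ, δ ∈ closedBall (0 : ℂ) r → u ∈ sphere (0 : ℂ) ε →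
      ‖fI' g k d γ τ α β δ u‖ ≤ C := by
    intro δ u h1 h2
    have h4 := hC (δ, u) ⟨h1, h2⟩
    simpa using h4
  have hC0 : 0 ≤ C := by
    refine le_trans (norm_nonneg _) (hC2 0 (ε:ℂ) (mem_closedBall_self hr0.le) ?_)
    simp [mem_sphere_iff_norm, Complex.norm_real, abs_of_pos hε]
  have hψ : Continuous (deriv (circleMap 0 ε)) := by
    have hd : deriv (circleMap 0 ε) = fun θ => circleMap 0 ε θ * Complex.I :=
      funext (deriv_circleMap 0 ε)
    rw [hd]
    exact (continuous_circleMap 0 ε).mul continuous_const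
  -- continuity of the integrand for fixed parameter
  have hcont : ∀ x : ℂ, x ∈ closedBall (0:ℂ) r →
      Continuous (fun θ : ℝ => deriv (circleMap 0 ε) θ •
        fI g k d γ τ α β x (circleMap 0 ε θ)) := by
    intro x hx
    have h2 : ContinuousOn ((fun p : ℂ × ℂ => fI g k d γ τ α β p.1 p.2) ∘
        (fun θ : ℝ => ((x, circleMap 0 ε θ) : ℂ × ℂ))) univ :=
      ContinuousOn.comp (contOn_fI g k d γ τ α β hε hε1 hne)
        ((continuous_const.prodMk (continuous_circleMap 0 ε)).continuousOn)
        (fun θ _ => ⟨hx, circleMap_mem_sphere 0 hε.le θ⟩)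
    have h3 := continuousOn_univ.mp h2
    simp only [Function.comp_def] at h3
    exact hψ.smul h3
  have hcont' : Continuous (fun θ : ℝ => deriv (circleMap 0 ε) θ •
      fI' g k d γ τ α β 0 (circleMap 0 ε θ)) := by
    have h2 : ContinuousOn ((fun p : ℂ × ℂ => fI' g k d γ τ α β p.1 p.2) ∘
        (fun θ : ℝ => (((0 : ℂ), circleMap 0 ε θ) : ℂ × ℂ))) univ :=
      ContinuousOn.comp (contOn_fI' g k d γ τ α β hε hε1 hne)
        ((continuous_const.prodMk (continuous_circleMap 0 ε)).continuousOn)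
        (fun θ _ => ⟨mem_closedBall_self hr0.le, circleMap_mem_sphere 0 hε.le θ⟩)
    have h3 := continuousOn_univ.mp h2
    simp only [Function.comp_def] at h3
    exact hψ.smul h3
  refine intervalIntegral.hasDerivAt_integral_of_dominated_loc_of_deriv_le (𝕜 := ℂ)
    (F := fun x θ => deriv (circleMap 0 ε) θ • fI g k d γ τ α β x (circleMap 0 ε θ))
    (F' := fun x θ => deriv (circleMap 0 ε) θ • fI' g k d γ τ α β x (circleMap 0 ε θ))
    (bound := fun _ => ε * C) (Metric.ball_mem_nhds (0:ℂ) hr0) ?_ ?_ ?_ ?_ ?_ ?_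
  · exact Filter.eventually_of_mem (Metric.closedBall_mem_nhds (0:ℂ) hr0)
      (fun x hx => ((hcont x hx).aestronglyMeasurable))
  · exact (hcont 0 (mem_closedBall_self hr0.le)).intervalIntegrable _ _
  · exact hcont'.aestronglyMeasurable
  · refine Filter.Eventually.of_forall (fun θ _ x hx => ?_)
    rw [norm_smul]
    have h1 : ‖deriv (circleMap 0 ε) θ‖ = ε := by
      rw [deriv_circleMap]
      simp only [norm_mul, Complex.norm_I, mul_one, norm_circleMap_zero]
      exact abs_of_pos hε
    rw [h1]
    exact mul_le_mul_of_nonneg_left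
      (hC2 x (circleMap 0 ε θ) (ball_subset_closedBall hx) (circleMap_mem_sphere 0 hε.le θ))
      hε.le
  · exact intervalIntegrable_const
  · refine Filter.Eventually.of_forall (fun θ _ x hx => ?_)
    exact HasDerivAt.const_smul (deriv (circleMap 0 ε) θ)
      (hasDerivAt_fI g k d γ τ α β
        (sphere_sinh_ne hε hε1 (circleMap_mem_sphere 0 hε.le θ))
        (hne2 x (circleMap 0 ε θ) (ball_subset_closedBall hx)
          (circleMap_mem_sphere 0 hε.le θ)))


open Metric MeasureTheory intervalIntegral Set in
set_option maxHeartbeats 1600000 in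
/-- `R_>^ν(k;λ,μ) − R_<^ν(k;λ,μ) = g·(−(2k+4))^{g−1}·
Res_{u=0}[e^{u(λ−μ)} e^{u(ν₁+ν₂)/2} φ̈(u)/(2sinh(u/2))^{2g}] du`; the residue is
extracted as the contour integral `(1/2πi)∮_{|u|=ε}` for small `ε`. -/
theorem stmt3 (g k : ℕ) (hg : 2 ≤ g) (hk : 0 < k) (ν₁ ν₂ : ℤ) (hν : ν₂ ≤ ν₁) (l m : ℤ) :
    ∃ ε₀ > (0 : ℝ), ∀ ε : ℝ, 0 < ε → ε < ε₀ →
      Rgt g k ν₁ ν₂ ε l m - Rlt g k ν₁ ν₂ ε l m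
        = (g : ℂ) * (-(2 * (k : ℂ) + 4)) ^ (g - 1) *
            ((2 * (Real.pi : ℂ) * Complex.I)⁻¹ *
              ∮ u in C(0, ε),
                Complex.exp (u * ((l : ℂ) - (m : ℂ))) *
                    Complex.exp (u * ((ν₁ : ℂ) + (ν₂ : ℂ)) / 2) * phiDDot (ν₁ - ν₂) u /
                  (2 * Complex.sinh (u / 2)) ^ (2 * g)) := by
  refine ⟨((k : ℝ) + 2)⁻¹, by positivity, fun ε hε hεlt => ?_⟩
  have hk2 : (0:ℝ) < (k : ℝ) + 2 := by positivity
  have hkε : ε * ((k : ℝ) + 2) < 1 := by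
    have h := mul_lt_mul_of_pos_right hεlt hk2
    rwa [inv_mul_cancel₀ (ne_of_gt hk2)] at h
  have hε1 : ε < 1 := by nlinarith [Nat.cast_nonneg (α := ℝ) k]
  set c : ℂ := (2 * (Real.pi : ℂ) * Complex.I)⁻¹ with hc
  obtain ⟨hint_gt, hder_gt⟩ := hasDerivAt_int g k (ν₁ - ν₂) ((ν₁ : ℂ) + (ν₂ : ℂ)) 0
    ((l : ℂ) + (m : ℂ) + 1) ((l : ℂ) - (m : ℂ)) hε hkε
  obtain ⟨hint_lt, hder_lt⟩ := hasDerivAt_int g k (ν₁ - ν₂) ((ν₁ : ℂ) + (ν₂ : ℂ)) 1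
    ((l : ℂ) + (m : ℂ) + 1) ((l : ℂ) - (m : ℂ) + (k : ℂ) + 2) hε hkε
  -- identify the functions inside `deriv` with the interval-integral form
  have hGt : (fun δ : ℂ => c *
      ∮ u in C(0, ε),
        (Complex.exp (u * ((l : ℂ) + (m : ℂ) + 1)) - Complex.exp (u * ((l : ℂ) - (m : ℂ)))) *
            Complex.exp (u * ((ν₁ : ℂ) + (ν₂ : ℂ)) / 2) *
            (2 * (k : ℂ) + 4 + δ * phiDDot (ν₁ - ν₂) u) ^ g /
          ((2 * Complex.sinh (u / 2)) ^ (2 * g) *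
            (1 - Complex.exp (u * ((k : ℂ) + 2) + δ * phiDot (ν₁ - ν₂) u))))
      = fun δ : ℂ => c * ∫ θ in (0:ℝ)..(2 * Real.pi), deriv (circleMap 0 ε) θ •
          fI g k (ν₁ - ν₂) ((ν₁ : ℂ) + (ν₂ : ℂ)) 0 ((l : ℂ) + (m : ℂ) + 1)
            ((l : ℂ) - (m : ℂ)) δ (circleMap 0 ε θ) := by
    funext δ
    congr 1
    have hb : ∀ u : ℂ,
        (Complex.exp (u * ((l : ℂ) + (m : ℂ) + 1)) - Complex.exp (u * ((l : ℂ) - (m : ℂ)))) *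
            Complex.exp (u * ((ν₁ : ℂ) + (ν₂ : ℂ)) / 2) *
            (2 * (k : ℂ) + 4 + δ * phiDDot (ν₁ - ν₂) u) ^ g /
          ((2 * Complex.sinh (u / 2)) ^ (2 * g) *
            (1 - Complex.exp (u * ((k : ℂ) + 2) + δ * phiDot (ν₁ - ν₂) u)))
        = fI g k (ν₁ - ν₂) ((ν₁ : ℂ) + (ν₂ : ℂ)) 0 ((l : ℂ) + (m : ℂ) + 1)
            ((l : ℂ) - (m : ℂ)) δ u := fun u => by
      simp only [fI, zero_mul, add_zero]
    calc (∮ u in C(0, ε),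
        (Complex.exp (u * ((l : ℂ) + (m : ℂ) + 1)) - Complex.exp (u * ((l : ℂ) - (m : ℂ)))) *
            Complex.exp (u * ((ν₁ : ℂ) + (ν₂ : ℂ)) / 2) *
            (2 * (k : ℂ) + 4 + δ * phiDDot (ν₁ - ν₂) u) ^ g /
          ((2 * Complex.sinh (u / 2)) ^ (2 * g) *
            (1 - Complex.exp (u * ((k : ℂ) + 2) + δ * phiDot (ν₁ - ν₂) u))))
        = ∮ u in C(0, ε), fI g k (ν₁ - ν₂) ((ν₁ : ℂ) + (ν₂ : ℂ)) 0 ((l : ℂ) + (m : ℂ) + 1)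
            ((l : ℂ) - (m : ℂ)) δ u := by simp only [hb]
      _ = _ := rfl
  have hLt : (fun δ : ℂ => c *
      ∮ u in C(0, ε),
        (Complex.exp (u * ((l : ℂ) + (m : ℂ) + 1)) -
              Complex.exp (u * ((l : ℂ) - (m : ℂ) + (k : ℂ) + 2) + δ * phiDot (ν₁ - ν₂) u)) *
            Complex.exp (u * ((ν₁ : ℂ) + (ν₂ : ℂ)) / 2) *
            (2 * (k : ℂ) + 4 + δ * phiDDot (ν₁ - ν₂) u) ^ g /
          ((2 * Complex.sinh (u / 2)) ^ (2 * g) *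
            (1 - Complex.exp (u * ((k : ℂ) + 2) + δ * phiDot (ν₁ - ν₂) u))))
      = fun δ : ℂ => c * ∫ θ in (0:ℝ)..(2 * Real.pi), deriv (circleMap 0 ε) θ •
          fI g k (ν₁ - ν₂) ((ν₁ : ℂ) + (ν₂ : ℂ)) 1 ((l : ℂ) + (m : ℂ) + 1)
            ((l : ℂ) - (m : ℂ) + (k : ℂ) + 2) δ (circleMap 0 ε θ) := by
    funext δ
    congr 1
    have hb : ∀ u : ℂ,
        (Complex.exp (u * ((l : ℂ) + (m : ℂ) + 1)) -
              Complex.exp (u * ((l : ℂ) - (m : ℂ) + (k : ℂ) + 2) + δ * phiDot (ν₁ - ν₂) u)) *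
            Complex.exp (u * ((ν₁ : ℂ) + (ν₂ : ℂ)) / 2) *
            (2 * (k : ℂ) + 4 + δ * phiDDot (ν₁ - ν₂) u) ^ g /
          ((2 * Complex.sinh (u / 2)) ^ (2 * g) *
            (1 - Complex.exp (u * ((k : ℂ) + 2) + δ * phiDot (ν₁ - ν₂) u)))
        = fI g k (ν₁ - ν₂) ((ν₁ : ℂ) + (ν₂ : ℂ)) 1 ((l : ℂ) + (m : ℂ) + 1)
            ((l : ℂ) - (m : ℂ) + (k : ℂ) + 2) δ u := fun u => by
      simp only [fI, one_mul]
    calc (∮ u in C(0, ε),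
        (Complex.exp (u * ((l : ℂ) + (m : ℂ) + 1)) -
              Complex.exp (u * ((l : ℂ) - (m : ℂ) + (k : ℂ) + 2) + δ * phiDot (ν₁ - ν₂) u)) *
            Complex.exp (u * ((ν₁ : ℂ) + (ν₂ : ℂ)) / 2) *
            (2 * (k : ℂ) + 4 + δ * phiDDot (ν₁ - ν₂) u) ^ g /
          ((2 * Complex.sinh (u / 2)) ^ (2 * g) *
            (1 - Complex.exp (u * ((k : ℂ) + 2) + δ * phiDot (ν₁ - ν₂) u))))
        = ∮ u in C(0, ε), fI g k (ν₁ - ν₂) ((ν₁ : ℂ) + (ν₂ : ℂ)) 1 ((l : ℂ) + (m : ℂ) + 1)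
            ((l : ℂ) - (m : ℂ) + (k : ℂ) + 2) δ u := by simp only [hb]
      _ = _ := rfl
  have e1 : deriv (fun δ : ℂ => c * ∫ θ in (0:ℝ)..(2 * Real.pi), deriv (circleMap 0 ε) θ •
        fI g k (ν₁ - ν₂) ((ν₁ : ℂ) + (ν₂ : ℂ)) 0 ((l : ℂ) + (m : ℂ) + 1)
          ((l : ℂ) - (m : ℂ)) δ (circleMap 0 ε θ)) 0
      = c * ∫ θ in (0:ℝ)..(2 * Real.pi), deriv (circleMap 0 ε) θ •
        fI' g k (ν₁ - ν₂) ((ν₁ : ℂ) + (ν₂ : ℂ)) 0 ((l : ℂ) + (m : ℂ) + 1)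
          ((l : ℂ) - (m : ℂ)) 0 (circleMap 0 ε θ) := (hder_gt.const_mul c).deriv
  have e2 : deriv (fun δ : ℂ => c * ∫ θ in (0:ℝ)..(2 * Real.pi), deriv (circleMap 0 ε) θ •
        fI g k (ν₁ - ν₂) ((ν₁ : ℂ) + (ν₂ : ℂ)) 1 ((l : ℂ) + (m : ℂ) + 1)
          ((l : ℂ) - (m : ℂ) + (k : ℂ) + 2) δ (circleMap 0 ε θ)) 0
      = c * ∫ θ in (0:ℝ)..(2 * Real.pi), deriv (circleMap 0 ε) θ •
        fI' g k (ν₁ - ν₂) ((ν₁ : ℂ) + (ν₂ : ℂ)) 1 ((l : ℂ) + (m : ℂ) + 1)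
          ((l : ℂ) - (m : ℂ) + (k : ℂ) + 2) 0 (circleMap 0 ε θ) := (hder_lt.const_mul c).deriv
  rw [Rgt, Rlt, hGt, hLt, e1, e2]
  -- combine the two integrals
  have hsub : (∫ θ in (0:ℝ)..(2 * Real.pi), deriv (circleMap 0 ε) θ •
        fI' g k (ν₁ - ν₂) ((ν₁ : ℂ) + (ν₂ : ℂ)) 0 ((l : ℂ) + (m : ℂ) + 1)
          ((l : ℂ) - (m : ℂ)) 0 (circleMap 0 ε θ))
      - (∫ θ in (0:ℝ)..(2 * Real.pi), deriv (circleMap 0 ε) θ •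
        fI' g k (ν₁ - ν₂) ((ν₁ : ℂ) + (ν₂ : ℂ)) 1 ((l : ℂ) + (m : ℂ) + 1)
          ((l : ℂ) - (m : ℂ) + (k : ℂ) + 2) 0 (circleMap 0 ε θ))
      = -((g : ℂ) * (2 * (k : ℂ) + 4) ^ (g - 1)) *
        ∫ θ in (0:ℝ)..(2 * Real.pi), deriv (circleMap 0 ε) θ •
          (Complex.exp (circleMap 0 ε θ * ((l : ℂ) - (m : ℂ))) *
              Complex.exp (circleMap 0 ε θ * ((ν₁ : ℂ) + (ν₂ : ℂ)) / 2) *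
              phiDDot (ν₁ - ν₂) (circleMap 0 ε θ) /
            (2 * Complex.sinh (circleMap 0 ε θ / 2)) ^ (2 * g)) := by
    rw [← intervalIntegral.integral_sub hint_gt hint_lt, ← intervalIntegral.integral_const_mul]
    apply intervalIntegral.integral_congr
    intro θ _
    have hu := circleMap_mem_sphere (0:ℂ) hε.le θ
    have hS := sphere_sinh_ne hε hε1 hu
    have habs : ‖circleMap 0 ε θ‖ = ε := by
      rw [norm_circleMap_zero, abs_of_pos hε]
    have hW0 : 1 - Complex.exp (circleMap 0 ε θ * ((k : ℂ) + 2)) ≠ 0 :=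
      one_sub_exp_ne₀ (ν₁ - ν₂) hε hkε habs
    have hβ2 : ((l : ℂ) - (m : ℂ) + (k : ℂ) + 2) = ((l : ℂ) - (m : ℂ)) + ((k : ℂ) + 2) := by
      ring
    beta_reduce
    rw [← smul_sub, hβ2, fI'_sub g k (by omega) (ν₁ - ν₂) ((ν₁ : ℂ) + (ν₂ : ℂ))
      ((l : ℂ) + (m : ℂ) + 1) ((l : ℂ) - (m : ℂ)) hS hW0]
    rw [smul_eq_mul, smul_eq_mul]
    ring
  have hIh : (∮ u in C(0, ε),
      Complex.exp (u * ((l : ℂ) - (m : ℂ))) *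
          Complex.exp (u * ((ν₁ : ℂ) + (ν₂ : ℂ)) / 2) * phiDDot (ν₁ - ν₂) u /
        (2 * Complex.sinh (u / 2)) ^ (2 * g))
      = ∫ θ in (0:ℝ)..(2 * Real.pi), deriv (circleMap 0 ε) θ •
          (Complex.exp (circleMap 0 ε θ * ((l : ℂ) - (m : ℂ))) *
              Complex.exp (circleMap 0 ε θ * ((ν₁ : ℂ) + (ν₂ : ℂ)) / 2) *
              phiDDot (ν₁ - ν₂) (circleMap 0 ε θ) /
            (2 * Complex.sinh (circleMap 0 ε θ / 2)) ^ (2 * g)) := rfl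
  rw [hIh]
  have h2 : (-1 : ℂ) ^ g = (-1 : ℂ) ^ (g - 1) * (-1) := by
    rw [← pow_succ]; congr 1; omega
  have h1 : (-(2 * (k : ℂ) + 4)) ^ (g - 1) = (-1 : ℂ) ^ (g - 1) * (2 * (k : ℂ) + 4) ^ (g - 1) := by
    rw [neg_pow]
  calc (-1 : ℂ) ^ g * (c * ∫ θ in (0:ℝ)..(2 * Real.pi), deriv (circleMap 0 ε) θ •
          fI' g k (ν₁ - ν₂) ((ν₁ : ℂ) + (ν₂ : ℂ)) 0 ((l : ℂ) + (m : ℂ) + 1)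
            ((l : ℂ) - (m : ℂ)) 0 (circleMap 0 ε θ))
      - (-1 : ℂ) ^ g * (c * ∫ θ in (0:ℝ)..(2 * Real.pi), deriv (circleMap 0 ε) θ •
          fI' g k (ν₁ - ν₂) ((ν₁ : ℂ) + (ν₂ : ℂ)) 1 ((l : ℂ) + (m : ℂ) + 1)
            ((l : ℂ) - (m : ℂ) + (k : ℂ) + 2) 0 (circleMap 0 ε θ))
      = (-1 : ℂ) ^ g * c *
        ((∫ θ in (0:ℝ)..(2 * Real.pi), deriv (circleMap 0 ε) θ •
          fI' g k (ν₁ - ν₂) ((ν₁ : ℂ) + (ν₂ : ℂ)) 0 ((l : ℂ) + (m : ℂ) + 1)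
            ((l : ℂ) - (m : ℂ)) 0 (circleMap 0 ε θ))
        - ∫ θ in (0:ℝ)..(2 * Real.pi), deriv (circleMap 0 ε) θ •
          fI' g k (ν₁ - ν₂) ((ν₁ : ℂ) + (ν₂ : ℂ)) 1 ((l : ℂ) + (m : ℂ) + 1)
            ((l : ℂ) - (m : ℂ) + (k : ℂ) + 2) 0 (circleMap 0 ε θ)) := by ring
    _ = (-1 : ℂ) ^ g * c * (-((g : ℂ) * (2 * (k : ℂ) + 4) ^ (g - 1)) *
        ∫ θ in (0:ℝ)..(2 * Real.pi), deriv (circleMap 0 ε) θ •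
          (Complex.exp (circleMap 0 ε θ * ((l : ℂ) - (m : ℂ))) *
              Complex.exp (circleMap 0 ε θ * ((ν₁ : ℂ) + (ν₂ : ℂ)) / 2) *
              phiDDot (ν₁ - ν₂) (circleMap 0 ε θ) /
            (2 * Complex.sinh (circleMap 0 ε θ / 2)) ^ (2 * g))) := by rw [hsub]
    _ = _ := by rw [h2, h1]; ring
end Auxiliary
end

section
/- For the wall structure on V* = {a ∈ ℝ^r : Σaᵢ = 0}: two regular elements a, b ∈ V* satisfy [a]_B = [b]_B for every basis B ⊂ Φ of V* if and only if a and b lie in the same connected component (chamber) of the complement of the union of all hyperplanes S_{Π,l} = {c : Σ_{j∈Π'} c_j = l}, over nontrivial partitions Π = (Π',Π'') of {1,...,r} and integers l. -/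
/-- The root `x_i - x_j` attached to an (oriented) edge `e = (i,j)`, as a vector in `ℝ^r`. -/
noncomputable def rootVec (r : ℕ) (e : Fin r × Fin r) : Fin r → ℝ :=
  fun i => (if i = e.1 then (1 : ℝ) else 0) - (if i = e.2 then (1 : ℝ) else 0)

/-- The set of regular elements of `V* = {a : Σaᵢ = 0}`: the complement of the union
of all walls `S_{Π,l} = {c : Σ_{j∈Π'} c_j = l}` over nontrivial partitions
`Π = (Π',Π'')` and integers `l`. -/
def wallFree (r : ℕ) : Set (Fin r → ℝ) :=
  {c | (∑ i, c i) = 0 ∧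
    ∀ P : Finset (Fin r), P.Nonempty → P ≠ Finset.univ → ∀ l : ℤ, ∑ i ∈ P, c i ≠ (l : ℝ)}

/-- `a − γ` lies in the half-open box `Σ_j [0,1)·β^{[j]}` spanned by the basis `E`;
for a basis `B` and regular `a` this says precisely that `γ = [a]_B`. -/
def inBox (r : ℕ) (a : Fin r → ℝ) (γ : Fin r → ℤ) (E : Fin (r - 1) → Fin r × Fin r) : Prop :=
  ∃ t : Fin (r - 1) → ℝ, (∀ j, 0 ≤ t j ∧ t j < 1) ∧
    (fun i => a i - (γ i : ℝ)) = ∑ j, t j • rootVec r (E j)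

lemma sum_rootVec (r : ℕ) (P : Finset (Fin r)) (e : Fin r × Fin r) :
    ∑ i ∈ P, rootVec r e i
      = (if e.1 ∈ P then (1:ℝ) else 0) - (if e.2 ∈ P then (1:ℝ) else 0) := by
  simp [rootVec, Finset.sum_sub_distrib, Finset.sum_ite_eq']
lemma cutSum_combo (r : ℕ) (P : Finset (Fin r)) (E : Fin (r-1) → Fin r × Fin r)
    (t : Fin (r-1) → ℝ) :
    ∑ i ∈ P, (∑ j, t j • rootVec r (E j)) i
      = ∑ j, t j * ((if (E j).1 ∈ P then (1:ℝ) else 0) - (if (E j).2 ∈ P then (1:ℝ) else 0)) := by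
  simp only [Finset.sum_apply, Pi.smul_apply, smul_eq_mul]
  rw [Finset.sum_comm]
  refine Finset.sum_congr rfl fun j _ => ?_
  rw [← Finset.mul_sum, sum_rootVec]

lemma span_roots (r : ℕ) (hr : 1 ≤ r) (E : Fin (r-1) → Fin r × Fin r)
    (hli : LinearIndependent ℝ (fun m => rootVec r (E m))) (v : Fin r → ℝ)
    (hv : ∑ i, v i = 0) :
    v ∈ Submodule.span ℝ (Set.range fun m => rootVec r (E m)) := by
  classical
  set φ : (Fin r → ℝ) →ₗ[ℝ] ℝ := ∑ i, LinearMap.proj i with hφdef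
  have hφ : ∀ w : Fin r → ℝ, φ w = ∑ i, w i := by
    intro w; simp [hφdef, LinearMap.proj]
  have hspan_le : Submodule.span ℝ (Set.range fun m => rootVec r (E m)) ≤ LinearMap.ker φ := by
    rw [Submodule.span_le]
    rintro _ ⟨m, rfl⟩
    have := sum_rootVec r Finset.univ (E m)
    simp only [Finset.mem_univ, if_pos] at this
    simp [LinearMap.mem_ker, hφ, this]
  have hrange : LinearMap.range φ = ⊤ := by
    rw [LinearMap.range_eq_top]
    intro x
    refine ⟨fun i => if i = ⟨0, by omega⟩ then x else 0, ?_⟩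
    rw [hφ]
    simp [Finset.sum_ite_eq']
  have hker : Module.finrank ℝ (LinearMap.ker φ) = r - 1 := by
    have h1 := LinearMap.finrank_range_add_finrank_ker φ
    rw [hrange] at h1
    simp [finrank_top] at h1
    omega
  have heq : Submodule.span ℝ (Set.range fun m => rootVec r (E m)) = LinearMap.ker φ := by
    apply Submodule.eq_of_le_of_finrank_eq hspan_le
    rw [finrank_span_eq_card hli, hker]
    simp
  rw [heq, LinearMap.mem_ker, hφ]
  exact hv

def reach (r : ℕ) (E : Fin (r-1) → Fin r × Fin r) (S : Set (Fin (r-1))) :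
    Fin r → Fin r → Prop :=
  Relation.ReflTransGen (fun u v => ∃ m ∈ S, E m = (u, v) ∨ E m = (v, u))

lemma rootVec_self (r : ℕ) (u : Fin r) : rootVec r (u, u) = 0 := by
  funext i; simp [rootVec]

lemma rootVec_add (r : ℕ) (u w v : Fin r) :
    rootVec r (u, v) = rootVec r (u, w) + rootVec r (w, v) := by
  funext i; simp only [rootVec, Pi.add_apply]; ring

lemma rootVec_rev (r : ℕ) (u v : Fin r) : rootVec r (v, u) = - rootVec r (u, v) := by
  funext i; simp only [rootVec, Pi.neg_apply]; ring

lemma reach_span (r : ℕ) (E : Fin (r-1) → Fin r × Fin r) (S : Set (Fin (r-1)))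
    {u v : Fin r} (h : reach r E S u v) :
    rootVec r (u, v) ∈ Submodule.span ℝ ((fun m => rootVec r (E m)) '' S) := by
  induction h with
  | refl => rw [rootVec_self]; exact Submodule.zero_mem _
  | tail hwv step ih =>
    rename_i w v
    obtain ⟨m, hm, hcase⟩ := step
    rw [rootVec_add r u w v]
    refine Submodule.add_mem _ ih ?_
    have hmem : rootVec r (E m) ∈ Submodule.span ℝ ((fun m => rootVec r (E m)) '' S) :=
      Submodule.subset_span ⟨m, hm, rfl⟩
    rcases hcase with h | h
    · rw [h] at hmem; exact hmem
    · rw [h] at hmem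
      rw [rootVec_rev]
      exact Submodule.neg_mem _ hmem

lemma reach_symm (r : ℕ) (E : Fin (r-1) → Fin r × Fin r) (S : Set (Fin (r-1)))
    {u v : Fin r} (h : reach r E S u v) : reach r E S v u := by
  have hs : Symmetric (fun u v : Fin r => ∃ m ∈ S, E m = (u, v) ∨ E m = (v, u)) := by
    rintro x y ⟨m, hm, h | h⟩
    exacts [⟨m, hm, Or.inr h⟩, ⟨m, hm, Or.inl h⟩]
  exact @Std.Symm.symm _ _ (@Relation.ReflTransGen.stdSymm _ _ ⟨fun x y hxy => hs hxy⟩) _ _ h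

lemma reach_univ (r : ℕ) (hr : 1 ≤ r) (E : Fin (r-1) → Fin r × Fin r)
    (hli : LinearIndependent ℝ (fun m => rootVec r (E m))) (u v : Fin r) :
    reach r E Set.univ u v := by
  classical
  by_contra hno
  set C : Finset (Fin r) := Finset.univ.filter (fun i => reach r E Set.univ u i) with hC
  have hsum : ∑ i, rootVec r (u, v) i = 0 := by
    have := sum_rootVec r Finset.univ (u, v); simpa using this
  have hmem : rootVec r (u, v) ∈ Submodule.span ℝ (Set.range fun m => rootVec r (E m)) :=
    span_roots r hr E hli _ hsum
  obtain ⟨c, hc⟩ := (Submodule.mem_span_range_iff_exists_fun ℝ).mp hmem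
  have h1 : ∑ i ∈ C, rootVec r (u, v) i = 1 := by
    rw [sum_rootVec]
    have hu : u ∈ C := by simp only [hC, Finset.mem_filter, Finset.mem_univ, true_and]; exact Relation.ReflTransGen.refl
    have hv : v ∉ C := by simpa [hC] using hno
    simp [hu, hv]
  have h0 : ∑ i ∈ C, (∑ j, c j • rootVec r (E j)) i = 0 := by
    rw [cutSum_combo]
    refine Finset.sum_eq_zero fun m _ => ?_
    have hiff : (E m).1 ∈ C ↔ (E m).2 ∈ C := by
      simp only [hC, Finset.mem_filter, Finset.mem_univ, true_and]
      have step1 : ∃ k ∈ (Set.univ : Set (Fin (r-1))), E k = ((E m).1, (E m).2) ∨ E k = ((E m).2, (E m).1) :=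
        ⟨m, trivial, Or.inl rfl⟩
      have step2 : ∃ k ∈ (Set.univ : Set (Fin (r-1))), E k = ((E m).2, (E m).1) ∨ E k = ((E m).1, (E m).2) :=
        ⟨m, trivial, Or.inr rfl⟩
      exact ⟨fun h => h.tail step1, fun h => h.tail step2⟩
    by_cases h1 : (E m).1 ∈ C
    · simp [h1, hiff.mp h1]
    · have h2 : (E m).2 ∉ C := fun h => h1 (hiff.mpr h)
      simp [h1, h2]
  rw [hc] at h0
  rw [h0] at h1
  norm_num at h1

lemma cut_lemma (r : ℕ) (E : Fin (r-1) → Fin r × Fin r)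
    (hli : LinearIndependent ℝ (fun m => rootVec r (E m))) (j : Fin (r-1)) :
    ∃ P : Finset (Fin r), P.Nonempty ∧ P ≠ Finset.univ ∧
      ∀ t : Fin (r-1) → ℝ, ∑ i ∈ P, (∑ m, t m • rootVec r (E m)) i = t j := by
  classical
  set S : Set (Fin (r-1)) := {m | m ≠ j} with hS
  set P : Finset (Fin r) := Finset.univ.filter (fun i => reach r E S (E j).1 i) with hP
  have h1 : (E j).1 ∈ P := by simp only [hP, Finset.mem_filter, Finset.mem_univ, true_and]; exact Relation.ReflTransGen.refl
  have h2 : (E j).2 ∉ P := by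
    simp only [hP, Finset.mem_filter, Finset.mem_univ, true_and]
    intro hre
    have hsp := reach_span r E S hre
    have hj : j ∉ S := by simp [hS]
    exact hli.notMem_span_image hj hsp
  have hiff : ∀ m, m ≠ j → ((E m).1 ∈ P ↔ (E m).2 ∈ P) := by
    intro m hm
    simp only [hP, Finset.mem_filter, Finset.mem_univ, true_and]
    have step1 : ∃ k ∈ S, E k = ((E m).1, (E m).2) ∨ E k = ((E m).2, (E m).1) :=
      ⟨m, hm, Or.inl rfl⟩
    have step2 : ∃ k ∈ S, E k = ((E m).2, (E m).1) ∨ E k = ((E m).1, (E m).2) :=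
      ⟨m, hm, Or.inr rfl⟩
    exact ⟨fun h => h.tail step1, fun h => h.tail step2⟩
  refine ⟨P, ⟨_, h1⟩, fun h => h2 (h ▸ Finset.mem_univ _), fun t => ?_⟩
  rw [cutSum_combo]
  rw [Finset.sum_eq_single j]
  · simp [h1, h2]
  · intro m _ hm
    by_cases hc : (E m).1 ∈ P
    · simp [hc, (hiff m hm).mp hc]
    · have : (E m).2 ∉ P := fun h => hc ((hiff m hm).mpr h)
      simp [hc, this]
  · intro h; exact absurd (Finset.mem_univ j) h

lemma floor_to_box (r : ℕ) (hr : 1 ≤ r) (a b : Fin r → ℝ)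
    (ha : ∑ i, a i = 0) (hb : ∑ i, b i = 0)
    (hfl : ∀ P : Finset (Fin r), P.Nonempty → P ≠ Finset.univ →
      ⌊∑ i ∈ P, a i⌋ = ⌊∑ i ∈ P, b i⌋)
    (E : Fin (r-1) → Fin r × Fin r)
    (hli : LinearIndependent ℝ (fun m => rootVec r (E m)))
    (γ : Fin r → ℤ) (hγ : ∑ i, γ i = 0)
    (h : inBox r a γ E) : inBox r b γ E := by
  classical
  obtain ⟨t, ht01, hteq⟩ := h
  have hγR : ∑ i, (γ i : ℝ) = 0 := by
    rw [← Int.cast_sum, hγ, Int.cast_zero]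
  have hwsum : ∑ i, (b i - (γ i : ℝ)) = 0 := by
    rw [Finset.sum_sub_distrib, hb, hγR, sub_zero]
  obtain ⟨s, hs⟩ := (Submodule.mem_span_range_iff_exists_fun ℝ).mp
    (span_roots r hr E hli (fun i => b i - (γ i : ℝ)) hwsum)
  refine ⟨s, fun j => ?_, hs.symm⟩
  obtain ⟨P, hPne, hPu, hdual⟩ := cut_lemma r E hli j
  -- t j = ∑_{i∈P} (a i - γ i)
  have hta : ∑ i ∈ P, (a i - (γ i : ℝ)) = t j := by
    rw [← hdual t]; exact Finset.sum_congr rfl fun i _ => congrFun hteq i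
  have htb : ∑ i ∈ P, (b i - (γ i : ℝ)) = s j := by
    rw [← hdual s]; exact Finset.sum_congr rfl fun i _ => (congrFun hs i).symm
  rw [Finset.sum_sub_distrib] at hta htb
  have hγP : ∑ i ∈ P, (γ i : ℝ) = ((∑ i ∈ P, γ i : ℤ) : ℝ) := by
    rw [Int.cast_sum]
  have hfa : ⌊∑ i ∈ P, a i⌋ = ∑ i ∈ P, γ i := by
    rw [Int.floor_eq_iff]
    constructor
    · rw [← hγP]; linarith [(ht01 j).1, hta]
    · rw [← hγP]; linarith [(ht01 j).2, hta]
  have hfb : ⌊∑ i ∈ P, b i⌋ = ∑ i ∈ P, γ i := by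
    rw [← hfl P hPne hPu]; exact hfa
  have := Int.floor_eq_iff.mp hfb
  rw [← hγP] at this
  constructor
  · linarith [this.1, htb]
  · linarith [this.2, htb]

lemma box_to_floor (r : ℕ) (hr : 2 ≤ r) (a b : Fin r → ℝ)
    (ha : ∑ i, a i = 0) (hb : ∑ i, b i = 0)
    (H : ∀ E : Fin (r - 1) → Fin r × Fin r, (∀ m, (E m).1 ≠ (E m).2) →
        LinearIndependent ℝ (fun m => rootVec r (E m)) →
        ∀ γ : Fin r → ℤ, (∑ i, γ i) = 0 → (inBox r a γ E ↔ inBox r b γ E))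
    (P : Finset (Fin r)) (hPne : P.Nonempty) (hPu : P ≠ Finset.univ) :
    ⌊∑ i ∈ P, a i⌋ = ⌊∑ i ∈ P, b i⌋ := by
  classical
  set k := P.card with hk
  have hk1 : 1 ≤ k := Finset.card_pos.mpr hPne
  have hkr : k < r := by
    have h1 : k ≤ r := by simpa using Finset.card_le_univ P
    rcases lt_or_eq_of_le h1 with h | h
    · exact h
    · exact absurd (Finset.eq_univ_of_card P (by simpa using h)) hPu
  have hcc : Pᶜ.card = r - k := by simp [Finset.card_compl, hk]
  set f := P.orderIsoOfFin rfl with hf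
  set g := Pᶜ.orderIsoOfFin hcc with hg
  set σ : Fin r → Fin r := fun i =>
    if h : (i : ℕ) < k then (f ⟨i, h⟩ : Fin r)
    else (g ⟨(i:ℕ) - k, by have := i.2; omega⟩ : Fin r) with hσ
  have hσP : ∀ (i : Fin r), (i:ℕ) < k → σ i ∈ P := by
    intro i h; simp only [hσ]; rw [dif_pos h]; exact (f ⟨i, h⟩).2
  have hσC : ∀ (i : Fin r), ¬(i:ℕ) < k → σ i ∈ Pᶜ := by
    intro i h; simp only [hσ]; rw [dif_neg h]; exact (g _).2
  have hinj : Function.Injective σ := by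
    intro i i' hii
    by_cases h : (i:ℕ) < k <;> by_cases h' : (i':ℕ) < k
    · simp only [hσ] at hii; rw [dif_pos h, dif_pos h'] at hii
      have h2 := f.injective (Subtype.coe_injective hii)
      have h3 : (i:ℕ) = (i':ℕ) := Fin.mk_eq_mk.mp h2
      exact Fin.ext h3
    · exact absurd (hσP i h) (by rw [hii]; exact Finset.mem_compl.mp (hσC i' h'))
    · exact absurd (hσP i' h') (by rw [← hii]; exact Finset.mem_compl.mp (hσC i h))
    · simp only [hσ] at hii; rw [dif_neg h, dif_neg h'] at hii
      have h2 := g.injective (Subtype.coe_injective hii)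
      have h3 : (i:ℕ) - k = (i':ℕ) - k := Fin.mk_eq_mk.mp h2
      exact Fin.ext (by omega)
  set T : ℕ → Finset (Fin r) :=
    fun n => (Finset.univ.filter (fun i : Fin r => (i:ℕ) < n)).image σ with hT
  have hmemT : ∀ (i : Fin r) (n : ℕ), σ i ∈ T n ↔ (i:ℕ) < n := by
    intro i n
    simp only [hT, Finset.mem_image, Finset.mem_filter, Finset.mem_univ, true_and]
    constructor
    · rintro ⟨i', hi', he⟩; rwa [hinj he] at hi'
    · exact fun h => ⟨i, h, rfl⟩
  have hr1 : ∀ j : Fin (r-1), (j:ℕ) < r := fun j => by have := j.2; omega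
  have hr2 : ∀ j : Fin (r-1), (j:ℕ)+1 < r := fun j => by have := j.2; omega
  set Epath : Fin (r-1) → Fin r × Fin r :=
    fun j => (σ ⟨(j:ℕ), hr1 j⟩, σ ⟨(j:ℕ)+1, hr2 j⟩) with hE
  have hne : ∀ m, (Epath m).1 ≠ (Epath m).2 := by
    intro m h
    have h2 := hinj h
    have h3 : (m:ℕ) = (m:ℕ)+1 := Fin.mk_eq_mk.mp h2
    omega
  have hcut : ∀ (n : ℕ) (t : Fin (r-1) → ℝ),
      ∑ i ∈ T n, (∑ m, t m • rootVec r (Epath m)) i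
        = ∑ m : Fin (r-1), t m *
            ((if (m:ℕ) < n then (1:ℝ) else 0) - (if (m:ℕ)+1 < n then (1:ℝ) else 0)) := by
    intro n t
    rw [cutSum_combo]
    refine Finset.sum_congr rfl fun m _ => ?_
    have e1 : (Epath m).1 ∈ T n ↔ (m:ℕ) < n := by
      rw [hE]; exact hmemT _ n
    have e2 : (Epath m).2 ∈ T n ↔ (m:ℕ)+1 < n := by
      rw [hE]; exact hmemT _ n
    rw [if_congr e1 rfl rfl, if_congr e2 rfl rfl]
  have hdual : ∀ (t : Fin (r-1) → ℝ) (j : Fin (r-1)),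
      ∑ i ∈ T ((j:ℕ)+1), (∑ m, t m • rootVec r (Epath m)) i = t j := by
    intro t j
    rw [hcut]
    rw [Finset.sum_eq_single j]
    · norm_num
    · intro m _ hm
      have hm' : (m:ℕ) ≠ (j:ℕ) := fun h => hm (Fin.ext h)
      have hz : ((if (m:ℕ) < (j:ℕ)+1 then (1:ℝ) else 0)
          - (if (m:ℕ)+1 < (j:ℕ)+1 then (1:ℝ) else 0)) = 0 := by
        by_cases h1 : (m:ℕ) < (j:ℕ)+1 <;> by_cases h2 : (m:ℕ)+1 < (j:ℕ)+1
        · simp [h1, h2]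
        · exact absurd (by omega : (m:ℕ) = (j:ℕ)) hm'
        · exact absurd h2 (by omega)
        · simp [h1, h2]
      rw [hz, mul_zero]
    · intro h; exact absurd (Finset.mem_univ j) h
  have hliP : LinearIndependent ℝ (fun m => rootVec r (Epath m)) := by
    rw [Fintype.linearIndependent_iff]
    intro c hc j
    have h1 := hdual c j
    rw [hc] at h1
    simpa using h1.symm
  have hTk : T k = P := by
    ext x
    simp only [hT, Finset.mem_image, Finset.mem_filter, Finset.mem_univ, true_and]
    constructor
    · rintro ⟨i, hi, rfl⟩; exact hσP i hi
    · intro hx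
      set q := f.symm ⟨x, hx⟩ with hq
      have hqk : (q:ℕ) < k := q.2
      refine ⟨⟨(q:ℕ), by omega⟩, by simpa using hqk, ?_⟩
      simp only [hσ]
      rw [dif_pos (show ((⟨(q:ℕ), by omega⟩ : Fin r) : ℕ) < k from hqk)]
      have h5 : f ⟨(q:ℕ), hqk⟩ = ⟨x, hx⟩ := by
        have : (⟨(q:ℕ), hqk⟩ : Fin k) = q := Fin.ext rfl
        rw [this, hq]; exact f.apply_symm_apply _
      exact congrArg Subtype.val h5
  set n : Fin (r-1) → ℤ := fun j => ⌊∑ i ∈ T ((j:ℕ)+1), a i⌋ with hn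
  set γ : Fin r → ℤ := fun i => ∑ j : Fin (r-1), n j *
      ((if i = σ ⟨(j:ℕ), hr1 j⟩ then 1 else 0)
        - (if i = σ ⟨(j:ℕ)+1, hr2 j⟩ then 1 else 0)) with hγ
  have hγcast : (fun i => (γ i : ℝ)) = ∑ j, (n j : ℝ) • rootVec r (Epath j) := by
    funext i
    simp only [hγ, Finset.sum_apply, Pi.smul_apply, smul_eq_mul, rootVec, hE]
    push_cast [apply_ite (fun z : ℤ => (z : ℝ))]
    rfl
  have hγ0 : ∑ i, γ i = 0 := by
    simp only [hγ]
    rw [Finset.sum_comm]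
    refine Finset.sum_eq_zero fun j _ => ?_
    rw [← Finset.mul_sum, Finset.sum_sub_distrib]
    simp [Finset.sum_ite_eq']
  have hγT : ∀ j : Fin (r-1), ∑ i ∈ T ((j:ℕ)+1), (γ i : ℝ) = n j := by
    intro j
    have h1 : ∑ i ∈ T ((j:ℕ)+1), (γ i : ℝ)
        = ∑ i ∈ T ((j:ℕ)+1), (∑ m, (n m : ℝ) • rootVec r (Epath m)) i :=
      Finset.sum_congr rfl fun i _ => congrFun hγcast i
    rw [h1, hdual]
  have hsum_aγ : ∑ i, (a i - (γ i : ℝ)) = 0 := by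
    rw [Finset.sum_sub_distrib, ha]
    rw [← Int.cast_sum, hγ0]; simp
  obtain ⟨t, hteq⟩ := (Submodule.mem_span_range_iff_exists_fun ℝ).mp
    (span_roots r (by omega) Epath hliP _ hsum_aγ)
  have hbox_a : inBox r a γ Epath := by
    refine ⟨t, fun j => ?_, hteq.symm⟩
    have h1 : ∑ i ∈ T ((j:ℕ)+1), (a i - (γ i:ℝ)) = t j := by
      rw [← hdual t j]
      exact Finset.sum_congr rfl fun i _ => (congrFun hteq i).symm
    rw [Finset.sum_sub_distrib, hγT j] at h1
    have hfl1 := Int.floor_le (∑ i ∈ T ((j:ℕ)+1), a i)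
    have hfl2 := Int.lt_floor_add_one (∑ i ∈ T ((j:ℕ)+1), a i)
    have hnj : n j = ⌊∑ i ∈ T ((j:ℕ)+1), a i⌋ := rfl
    rw [hnj] at h1
    constructor <;> linarith
  obtain ⟨s, hs01, hseq⟩ := (H Epath hne hliP γ hγ0).mp hbox_a
  have hnb : ∀ j : Fin (r-1), n j = ⌊∑ i ∈ T ((j:ℕ)+1), b i⌋ := by
    intro j
    have h1 : ∑ i ∈ T ((j:ℕ)+1), (b i - (γ i:ℝ)) = s j := by
      rw [← hdual s j]
      exact Finset.sum_congr rfl fun i _ => congrFun hseq i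
    rw [Finset.sum_sub_distrib, hγT j] at h1
    have := (hs01 j).1
    have := (hs01 j).2
    symm
    rw [Int.floor_eq_iff]
    constructor <;> linarith
  have hj0 : k - 1 < r - 1 := by omega
  have hkk : ((⟨k-1, hj0⟩ : Fin (r-1)) : ℕ) + 1 = k := by
    show (k-1) + 1 = k
    omega
  have hna : n ⟨k-1, hj0⟩ = ⌊∑ i ∈ P, a i⌋ := by
    rw [hn]
    simp only []
    rw [hkk, hTk]
  have hnb2 := hnb ⟨k-1, hj0⟩
  rw [hkk, hTk] at hnb2
  rw [← hna, hnb2]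

lemma component_to_floor (r : ℕ) (a b : Fin r → ℝ) (ha : a ∈ wallFree r)
    (hconn : b ∈ connectedComponentIn (wallFree r) a)
    (P : Finset (Fin r)) (hPne : P.Nonempty) (hPu : P ≠ Finset.univ) :
    ⌊∑ i ∈ P, a i⌋ = ⌊∑ i ∈ P, b i⌋ := by
  set K := connectedComponentIn (wallFree r) a with hK
  have hKpre : IsPreconnected K := isPreconnected_connectedComponentIn
  have haK : a ∈ K := mem_connectedComponentIn ha
  have hKsub : K ⊆ wallFree r := connectedComponentIn_subset _ _
  set φ : (Fin r → ℝ) → ℝ := fun c => ∑ i ∈ P, c i with hφ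
  have hφc : ContinuousOn φ K :=
    (continuous_finset_sum P fun i _ => continuous_apply i).continuousOn
  have hnoint : ∀ c ∈ K, ∀ l : ℤ, φ c ≠ (l:ℝ) := fun c hc => (hKsub hc).2 P hPne hPu
  have key : ∀ x y : Fin r → ℝ, x ∈ K → y ∈ K → ⌊φ x⌋ < ⌊φ y⌋ → False := by
    intro x y hx hy hlt
    have h1 : φ x < (⌊φ y⌋ : ℝ) := by
      have h0 := Int.lt_floor_add_one (φ x)
      have h2 : (⌊φ x⌋:ℝ) + 1 ≤ (⌊φ y⌋:ℝ) := by
        exact_mod_cast (by omega : ⌊φ x⌋ + 1 ≤ ⌊φ y⌋)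
      linarith
    have h2 : (⌊φ y⌋ : ℝ) ≤ φ y := Int.floor_le _
    have hmem : (⌊φ y⌋ : ℝ) ∈ Set.Icc (φ x) (φ y) := ⟨le_of_lt h1, h2⟩
    obtain ⟨c, hcK, hcφ⟩ := hKpre.intermediate_value hx hy hφc hmem
    exact hnoint c hcK ⌊φ y⌋ hcφ
  rcases lt_trichotomy ⌊φ a⌋ ⌊φ b⌋ with h | h | h
  · exact (key a b haK hconn h).elim
  · exact h
  · exact (key b a hconn haK h).elim

lemma floor_to_component (r : ℕ) (a b : Fin r → ℝ) (ha : a ∈ wallFree r) (hb : b ∈ wallFree r)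
    (hfl : ∀ P : Finset (Fin r), P.Nonempty → P ≠ Finset.univ →
      ⌊∑ i ∈ P, a i⌋ = ⌊∑ i ∈ P, b i⌋) :
    b ∈ connectedComponentIn (wallFree r) a := by
  classical
  set C : Set (Fin r → ℝ) := {c | (∑ i, c i) = 0 ∧
      ∀ P : Finset (Fin r), P.Nonempty → P ≠ Finset.univ →
        ∑ i ∈ P, c i ∈ Set.Ioo ((⌊∑ i ∈ P, a i⌋ : ℝ)) ((⌊∑ i ∈ P, a i⌋ : ℝ) + 1)} with hC
  have hconv : Convex ℝ C := by
    intro x hx y hy θ μ hθ hμ hθμ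
    constructor
    · have h0 : ∑ i, (θ • x + μ • y) i = θ * ∑ i, x i + μ * ∑ i, y i := by
        simp [Finset.sum_add_distrib, Finset.mul_sum]
      rw [h0, hx.1, hy.1]; ring
    · intro P hPne hPu
      have h0 : ∑ i ∈ P, (θ • x + μ • y) i = θ * ∑ i ∈ P, x i + μ * ∑ i ∈ P, y i := by
        simp [Finset.sum_add_distrib, Finset.mul_sum]
      rw [h0]
      exact convex_Ioo _ _ (hx.2 P hPne hPu) (hy.2 P hPne hPu) hθ hμ hθμ
  have hmem : ∀ c, c ∈ wallFree r →
      (∀ P : Finset (Fin r), P.Nonempty → P ≠ Finset.univ →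
        ⌊∑ i ∈ P, c i⌋ = ⌊∑ i ∈ P, a i⌋) → c ∈ C := by
    intro c hc hfloor
    refine ⟨hc.1, fun P hPne hPu => ?_⟩
    have h1 : (⌊∑ i ∈ P, c i⌋:ℝ) ≤ ∑ i ∈ P, c i := Int.floor_le _
    have h2 := Int.lt_floor_add_one (∑ i ∈ P, c i)
    have h3 : (∑ i ∈ P, c i) ≠ ((⌊∑ i ∈ P, c i⌋:ℤ):ℝ) := hc.2 P hPne hPu _
    rw [hfloor P hPne hPu] at h1 h2 h3
    exact ⟨lt_of_le_of_ne h1 (Ne.symm h3), h2⟩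
  have haC : a ∈ C := hmem a ha (fun P _ _ => rfl)
  have hbC : b ∈ C := hmem b hb (fun P h1 h2 => (hfl P h1 h2).symm)
  have hsub : C ⊆ wallFree r := by
    intro c hc
    refine ⟨hc.1, fun P hPne hPu l hl => ?_⟩
    have h := hc.2 P hPne hPu
    rw [hl] at h
    obtain ⟨h1, h2⟩ := h
    have i1 : ⌊∑ i ∈ P, a i⌋ < l := by exact_mod_cast h1
    have i2 : l < ⌊∑ i ∈ P, a i⌋ + 1 := by exact_mod_cast h2
    omega
  exact hconv.isPreconnected.subset_connectedComponentIn haC hsub hbC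

/-- two regular elements `a, b ∈ V*` satisfy `[a]_B = [b]_B` for every
basis `B ⊆ Φ` of `V*` if and only if `a` and `b` lie in the same connected component
(chamber) of the complement of the union of all walls `S_{Π,l}`. -/
theorem stmt12 (r : ℕ) (hr : 2 ≤ r) (a b : Fin r → ℝ)
    (ha : a ∈ wallFree r) (hb : b ∈ wallFree r) :
    (∀ E : Fin (r - 1) → Fin r × Fin r, (∀ m, (E m).1 ≠ (E m).2) →
        LinearIndependent ℝ (fun m => rootVec r (E m)) →
        ∀ γ : Fin r → ℤ, (∑ i, γ i) = 0 → (inBox r a γ E ↔ inBox r b γ E))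
    ↔ b ∈ connectedComponentIn (wallFree r) a := by
  constructor
  · intro H
    exact floor_to_component r a b ha hb
      (fun P h1 h2 => box_to_floor r hr a b ha.1 hb.1 H P h1 h2)
  · intro hconn E hne hli γ hγ
    have hfl := fun P h1 h2 => component_to_floor r a b ha hconn P h1 h2
    constructor
    · exact floor_to_box r (by omega) a b ha.1 hb.1 hfl E hli γ hγ
    · exact floor_to_box r (by omega) b a hb.1 ha.1
        (fun P h1 h2 => (hfl P h1 h2).symm) E hli γ hγ
end
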